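/- Let k ≥ 1 and M with 0 ≤ M ≤ k be integers. Then b_{k,M}(2,0) = (−1)^{k(k−1)/2} Σ_{l₀+l₁+⋯+l_k = 2M} Σ_{m₀+m₁+⋯+m_k = 2l₀} (−2)^{−m₀} · C(2M; l₀,…,l_k) · C(2l₀; m₀,…,m_k) · ( ∏_{i=1}^{k} 1/(2k − i + 2l_i + m_i)! ) · ∏_{1≤i<j≤k}( 2l_j − 2l_i + m_j − m_i − j + i ), the sums being over nonnegative integers l₀,…,l_k with sum 2M and m₀,…,m_k with sum 2l₀. -/

import Mathlib

open MeasureTheory Finset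

noncomputable section

/-- `besselFactor m x = ∑_{j≥0} x^j/(j!·(m+j)!)`, so that for `x ≥ 0` one has
`I_m(2√x) = x^{m/2} · besselFactor m x`, where `I_m` is the modified Bessel function of the
first kind. -/
def besselFactor (m : ℕ) (x : ℝ) : ℝ := ∑' j : ℕ, x ^ j / (j.factorial * (m + j).factorial)

/-- The coefficient `b_{k,M}(2,0)`.  Here
`e^{-x/2} · det_{k×k}(besselFactor (2lᵢ+i+j-1) x)` is exactly the analytic extension at
`x = 0` of `e^{-x/2} · x^{h-2M-k²/2} · det_{k×k}(I_{2lᵢ+i+j-1}(2√x))`, since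
`I_m(2√x) = x^{m/2}·besselFactor m x` and the determinant of the `x^{m/2}` factors contributes
exactly `x^{k²/2 + Σᵢ lᵢ} = x^{k²/2 + 2M - h}`. -/
def b20 (k M : ℕ) : ℝ :=
  (-1 : ℝ) ^ (k * (k - 1) / 2) *
    ∑ h ∈ Finset.range (2 * M + 1),
      ∑ l ∈ (Fintype.piFinset fun _ : Fin k => Finset.range (2 * M + 1)).filter
          (fun l => h + ∑ i, l i = 2 * M),
        (Nat.multinomial Finset.univ (Fin.cons h l) : ℝ) *
          iteratedDeriv (2 * h)
            (fun x : ℝ => Real.exp (-x / 2) *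
              (Matrix.of fun i j : Fin k =>
                besselFactor (2 * l i + (i : ℕ) + (j : ℕ) + 1) x).det) 0

namespace B20

/-- Cauchy product of `r` absolutely convergent series, indexed over `Fin r → ℕ`. -/
lemma hasSum_pi_prod : ∀ (r : ℕ) (c : Fin r → ℕ → ℝ) (S : Fin r → ℝ),
    (∀ i, Summable fun j => |c i j|) → (∀ i, HasSum (c i) (S i)) →
    HasSum (fun m : Fin r → ℕ => ∏ i, c i (m i)) (∏ i, S i)
  | 0, c, S, _, _ => by
      have h1 : (fun m : Fin 0 → ℕ => ∏ i, c i (m i)) = fun _ => 1 := by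
        funext m; simp
      have h2 : (∏ i, S i) = 1 := by simp
      rw [h1, h2]
      simpa using hasSum_fintype (fun _ : Fin 0 → ℕ => (1 : ℝ))
  | (r+1), c, S, habs, hS => by
      have ih : HasSum (fun m : Fin r → ℕ => ∏ i : Fin r, c i.succ (m i)) (∏ i : Fin r, S i.succ) :=
        hasSum_pi_prod r (fun i : Fin r => c i.succ) (fun i : Fin r => S i.succ)
          (fun i : Fin r => habs i.succ) (fun i : Fin r => hS i.succ)
      have ihabs : HasSum (fun m : Fin r → ℕ => ∏ i : Fin r, |c i.succ (m i)|)
          (∏ i : Fin r, ∑' j, |c i.succ j|) :=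
        hasSum_pi_prod r (fun (i : Fin r) (j:ℕ) => |c i.succ j|)
          (fun i : Fin r => ∑' j, |c i.succ j|)
          (fun i : Fin r => by simpa [abs_abs] using habs i.succ)
          (fun i : Fin r => (habs i.succ).hasSum)
      have hg_norm : Summable (fun m : Fin r → ℕ => ‖∏ i : Fin r, c i.succ (m i)‖) := by
        refine ihabs.summable.congr fun m => ?_
        rw [Real.norm_eq_abs, Finset.abs_prod]
      have hf_norm : Summable (fun j => ‖c 0 j‖) := by
        simpa [Real.norm_eq_abs] using habs 0
      have hsum2 : HasSum (fun p : ℕ × (Fin r → ℕ) => c 0 p.1 * ∏ i : Fin r, c i.succ (p.2 i))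
          (S 0 * ∏ i : Fin r, S i.succ) := by
        have hs := summable_mul_of_summable_norm (R := ℝ) hf_norm hg_norm
        have ht := tsum_mul_tsum_of_summable_norm (R := ℝ) hf_norm hg_norm
        rw [(hS 0).tsum_eq, ih.tsum_eq] at ht
        rw [ht]
        exact hs.hasSum
      refine (Equiv.hasSum_iff (Fin.consEquiv (fun _ : Fin (r+1) => ℕ))).1 ?_
      have heq : ((fun m : Fin (r+1) → ℕ => ∏ i, c i (m i)) ∘
          (Fin.consEquiv (fun _ : Fin (r+1) => ℕ)))
          = fun p : ℕ × (Fin r → ℕ) => c 0 p.1 * ∏ i : Fin r, c i.succ (p.2 i) := by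
        funext p
        simp [Fin.consEquiv, Fin.prod_univ_succ]
      rw [heq]
      have hval : (∏ i, S i) = S 0 * ∏ i : Fin r, S i.succ := Fin.prod_univ_succ S
      rw [hval]
      exact hsum2

/-- Regrouping an absolutely summable power-type family by total degree. -/
lemma hasSum_group {K : ℕ} {g : (Fin K → ℕ) → ℝ} {x S : ℝ}
    (h : HasSum (fun m : Fin K → ℕ => g m * x ^ (∑ i, m i)) S) :
    HasSum (fun n : ℕ =>
      (∑ m ∈ (Fintype.piFinset fun _ : Fin K => Finset.range (n+1)).filter
        (fun m => ∑ i, m i = n), g m) * x ^ n) S := by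
  classical
  have hmem : ∀ (n : ℕ) (m : Fin K → ℕ),
      m ∈ (Fintype.piFinset fun _ : Fin K => Finset.range (n+1)).filter
        (fun m => ∑ i, m i = n) ↔ (∑ i, m i) = n := by
    intro n m
    simp only [mem_filter, Fintype.mem_piFinset, mem_range]
    constructor
    · exact fun h => h.2
    · intro h
      refine ⟨fun i => ?_, h⟩
      have : m i ≤ ∑ i, m i :=
        Finset.single_le_sum (f := fun i => m i) (fun _ _ => Nat.zero_le _) (mem_univ i)
      omega
  haveI : ∀ n, Fintype {m : Fin K → ℕ // (∑ i, m i) = n} :=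
    fun n => Fintype.subtype _ (hmem n)
  have h2 : HasSum ((fun m : Fin K → ℕ => g m * x ^ (∑ i, m i)) ∘
      (Equiv.sigmaFiberEquiv (fun m : Fin K → ℕ => ∑ i, m i))) S :=
    (Equiv.hasSum_iff _).2 h
  refine h2.sigma fun n => ?_
  have h3 := hasSum_fintype
    (fun c : {m : Fin K → ℕ // (∑ i, m i) = n} => g c.1 * x ^ (∑ i, (c.1 : Fin K → ℕ) i))
  have h4 : (∑ c : {m : Fin K → ℕ // (∑ i, m i) = n}, g c.1 * x ^ (∑ i, (c.1 : Fin K → ℕ) i))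
      = (∑ m ∈ (Fintype.piFinset fun _ : Fin K => Finset.range (n+1)).filter
        (fun m => ∑ i, m i = n), g m) * x ^ n := by
    rw [Finset.sum_mul, Finset.sum_subtype _ (hmem n) (fun m => g m * x ^ n)]
    exact Finset.sum_congr rfl fun c _ => by rw [c.2]
  rw [h4] at h3
  exact h3

def coefB (ν j : ℕ) : ℝ := 1 / ((j.factorial : ℝ) * ((ν + j).factorial : ℝ))

lemma summable_abs_coefB (ν : ℕ) (x : ℝ) : Summable fun j => |coefB ν j * x ^ j| := by
  refine Summable.of_nonneg_of_le (fun j => abs_nonneg _) (fun j => ?_)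
    (Real.summable_pow_div_factorial |x|)
  rw [abs_mul, abs_pow]
  unfold coefB
  rw [abs_of_nonneg (by positivity), one_div, inv_mul_eq_div]
  apply div_le_div_of_nonneg_left (by positivity) (by positivity)
  have h1 : (1 : ℝ) ≤ ((ν + j).factorial : ℝ) := by
    exact_mod_cast (ν + j).factorial_pos
  nlinarith [(show (0:ℝ) < (j.factorial : ℝ) by positivity)]

lemma hasSum_coefB (ν : ℕ) (x : ℝ) :
    HasSum (fun j => coefB ν j * x ^ j) (besselFactor ν x) := by
  have hs : Summable (fun j => coefB ν j * x ^ j) := (summable_abs_coefB ν x).of_abs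
  have heq : (fun j => coefB ν j * x ^ j)
      = fun j => x ^ j / ((j.factorial : ℝ) * ((ν + j).factorial : ℝ)) := by
    funext j; rw [coefB, one_div, inv_mul_eq_div]
  rw [heq]
  have hs2 : Summable (fun j => x ^ j / ((j.factorial : ℝ) * ((ν + j).factorial : ℝ))) := by
    rw [← heq]; exact hs
  exact hs2.hasSum

lemma abs_expC (x : ℝ) (j : ℕ) :
    |((-1/2 : ℝ) ^ j / j.factorial) * x ^ j| = (|x|/2) ^ j / j.factorial := by
  rw [abs_mul, abs_div, abs_pow, abs_pow, Nat.abs_cast, div_mul_eq_mul_div, ← mul_pow]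
  have h1 : |(-1/2 : ℝ)| = 1/2 := by norm_num
  rw [h1]
  ring_nf

lemma summable_abs_expC (x : ℝ) :
    Summable fun j => |((-1/2 : ℝ) ^ j / j.factorial) * x ^ j| := by
  have := Real.summable_pow_div_factorial (|x|/2)
  refine this.congr fun j => (abs_expC x j).symm

lemma hasSum_expC (x : ℝ) :
    HasSum (fun j => ((-1/2 : ℝ) ^ j / j.factorial) * x ^ j) (Real.exp (-x/2)) := by
  have h := NormedSpace.expSeries_div_hasSum_exp (-x/2)
  rw [← Real.exp_eq_exp_ℝ] at h
  have heq : (fun j => ((-1/2 : ℝ) ^ j / j.factorial) * x ^ j)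
      = fun j => (-x/2) ^ j / (j.factorial : ℝ) := by
    funext j
    rw [div_mul_eq_mul_div, ← mul_pow]
    ring_nf
  rw [heq]
  exact h

def Aterm (k : ℕ) (l : Fin k → ℕ) (m : Fin (k+1) → ℕ) : ℝ :=
  ((-1/2 : ℝ) ^ (m 0) / (m 0).factorial) *
    ∑ σ : Equiv.Perm (Fin k), ((Equiv.Perm.sign σ : ℤ) : ℝ) *
      ∏ i : Fin k, coefB (2 * l i + (i : ℕ) + (σ i : ℕ) + 1) (m i.succ)

def acoef (k : ℕ) (l : Fin k → ℕ) (n : ℕ) : ℝ :=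
  ∑ m ∈ (Fintype.piFinset fun _ : Fin (k+1) => Finset.range (n+1)).filter
    (fun m => ∑ i, m i = n), Aterm k l m

def fFun (k : ℕ) (l : Fin k → ℕ) : ℝ → ℝ := fun x =>
  Real.exp (-x / 2) *
    (Matrix.of fun i j : Fin k => besselFactor (2 * l i + (i : ℕ) + (j : ℕ) + 1) x).det

lemma det_eq_sum_perm {K : ℕ} (M : Matrix (Fin K) (Fin K) ℝ) :
    M.det = ∑ σ : Equiv.Perm (Fin K),
      ((Equiv.Perm.sign σ : ℤ) : ℝ) * ∏ i : Fin K, M i (σ i) := by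
  rw [← Matrix.det_transpose, Matrix.det_apply']
  exact Finset.sum_congr rfl fun σ _ => by
    congr 1

lemma hasSum_sigma_term (k : ℕ) (l : Fin k → ℕ) (σ : Equiv.Perm (Fin k)) (x : ℝ) :
    HasSum (fun m : Fin (k+1) → ℕ =>
      (((-1/2 : ℝ) ^ (m 0) / (m 0).factorial) *
        ∏ i : Fin k, coefB (2 * l i + (i : ℕ) + (σ i : ℕ) + 1) (m i.succ)) * x ^ (∑ i, m i))
      (Real.exp (-x/2) *
        ∏ i : Fin k, besselFactor (2 * l i + (i : ℕ) + (σ i : ℕ) + 1) x) := by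
  set c : Fin (k+1) → ℕ → ℝ :=
    Fin.cases (fun j => ((-1/2 : ℝ) ^ j / j.factorial) * x ^ j)
      (fun i j => coefB (2 * l i + (i : ℕ) + (σ i : ℕ) + 1) j * x ^ j) with hc
  set S : Fin (k+1) → ℝ :=
    Fin.cases (Real.exp (-x/2))
      (fun i => besselFactor (2 * l i + (i : ℕ) + (σ i : ℕ) + 1) x) with hS2
  have habs : ∀ i, Summable fun j => |c i j| := by
    refine Fin.cases ?_ ?_
    · simpa [hc] using summable_abs_expC x
    · intro i
      simpa [hc] using summable_abs_coefB (2 * l i + (i : ℕ) + (σ i : ℕ) + 1) x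
  have hSsum : ∀ i, HasSum (c i) (S i) := by
    refine Fin.cases ?_ ?_
    · simpa [hc, hS2] using hasSum_expC x
    · intro i
      simpa [hc, hS2] using hasSum_coefB (2 * l i + (i : ℕ) + (σ i : ℕ) + 1) x
  have h := hasSum_pi_prod (k+1) c S habs hSsum
  have hfun : (fun m : Fin (k+1) → ℕ => ∏ i, c i (m i))
      = fun m : Fin (k+1) → ℕ =>
        (((-1/2 : ℝ) ^ (m 0) / (m 0).factorial) *
          ∏ i : Fin k, coefB (2 * l i + (i : ℕ) + (σ i : ℕ) + 1) (m i.succ)) * x ^ (∑ i, m i) := by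
    funext m
    rw [Fin.prod_univ_succ]
    simp only [hc, Fin.cases_zero, Fin.cases_succ]
    rw [Finset.prod_mul_distrib, Finset.prod_pow_eq_pow_sum, Fin.sum_univ_succ, pow_add]
    ring
  have hval : (∏ i, S i) = Real.exp (-x/2) *
      ∏ i : Fin k, besselFactor (2 * l i + (i : ℕ) + (σ i : ℕ) + 1) x := by
    rw [Fin.prod_univ_succ]
    simp only [hS2, Fin.cases_zero, Fin.cases_succ]
  rw [hfun, hval] at h
  exact h

lemma hasSum_master (k : ℕ) (l : Fin k → ℕ) (x : ℝ) :
    HasSum (fun m : Fin (k+1) → ℕ => Aterm k l m * x ^ (∑ i, m i)) (fFun k l x) := by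
  have hdet : fFun k l x = ∑ σ : Equiv.Perm (Fin k), ((Equiv.Perm.sign σ : ℤ) : ℝ) *
      (Real.exp (-x/2) * ∏ i : Fin k, besselFactor (2 * l i + (i : ℕ) + (σ i : ℕ) + 1) x) := by
    unfold fFun
    rw [det_eq_sum_perm, Finset.mul_sum]
    refine Finset.sum_congr rfl fun σ _ => ?_
    simp only [Matrix.of_apply]
    ring
  rw [hdet]
  have h := hasSum_sum (s := (univ : Finset (Equiv.Perm (Fin k))))
    (fun σ _ => ((hasSum_sigma_term k l σ x).mul_left (((Equiv.Perm.sign σ : ℤ) : ℝ))))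
  have hfe : (fun m : Fin (k+1) → ℕ => ∑ σ ∈ (univ : Finset (Equiv.Perm (Fin k))),
      ((Equiv.Perm.sign σ : ℤ) : ℝ) *
      ((((-1/2 : ℝ) ^ (m 0) / (m 0).factorial) *
        ∏ i : Fin k, coefB (2 * l i + (i : ℕ) + (σ i : ℕ) + 1) (m i.succ)) * x ^ (∑ i, m i)))
      = fun m : Fin (k+1) → ℕ => Aterm k l m * x ^ (∑ i, m i) := by
    funext m
    simp only [Aterm]
    rw [Finset.mul_sum, Finset.sum_mul]
    exact Finset.sum_congr rfl fun σ _ => by ring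
  rw [hfe] at h
  exact h

lemma iteratedDeriv_fFun (k : ℕ) (l : Fin k → ℕ) (n : ℕ) :
    iteratedDeriv n (fFun k l) 0 = (n.factorial : ℝ) * acoef k l n := by
  set p := FormalMultilinearSeries.ofScalars ℝ (acoef k l) with hp
  have hx : ∀ x : ℝ, HasSum (fun n => acoef k l n * x ^ n) (fFun k l x) := fun x =>
    hasSum_group (hasSum_master k l x)
  have hrad : (1 : ENNReal) ≤ p.radius := by
    have h1 : Filter.Tendsto (fun n => acoef k l n * (1:ℝ) ^ n) Filter.atTop (nhds 0) :=
      (hx 1).summable.tendsto_atTop_zero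
    have h2 : Filter.Tendsto (fun n => ‖p n‖ * ((1:NNReal) : ℝ) ^ n) Filter.atTop (nhds 0) := by
      have h3 := h1.abs
      simp only [one_pow, mul_one, abs_zero] at h3
      have h4 : (fun n => ‖p n‖ * ((1:NNReal) : ℝ) ^ n) = fun n => |acoef k l n| := by
        funext n
        rw [hp, FormalMultilinearSeries.ofScalars_norm, Real.norm_eq_abs]
        simp
      rw [h4]
      exact h3
    simpa using FormalMultilinearSeries.le_radius_of_tendsto p h2
  have hball : HasFPowerSeriesOnBall (fFun k l) p 0 1 := by
    refine ⟨hrad, one_pos, ?_⟩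
    intro y hy
    have := hx y
    simp only [hp, FormalMultilinearSeries.ofScalars_apply_eq, smul_eq_mul, zero_add]
    exact this
  have h1 := hball.factorial_smul 1 n
  rw [iteratedDeriv_eq_iteratedFDeriv, ← h1, hp,
    FormalMultilinearSeries.ofScalars_apply_eq]
  simp [nsmul_eq_mul]

lemma ascFactorial_cast (c s : ℕ) :
    ((c.ascFactorial s : ℕ) : ℝ) = ∏ t ∈ Finset.range s, ((c : ℝ) + t) := by
  induction s with
  | zero => simp
  | succ s ih =>
    rw [Nat.ascFactorial_succ, Finset.prod_range_succ, ← ih]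
    push_cast
    ring

lemma prod_pairs_eq {K : ℕ} (f : Fin K → Fin K → ℝ) :
    ∏ p ∈ univ.filter (fun p : Fin K × Fin K => p.1 < p.2), f p.1 p.2
      = ∏ i : Fin K, ∏ j ∈ Ioi i, f i j := by
  rw [Finset.prod_sigma']
  refine Finset.prod_nbij' (fun p : Fin K × Fin K => (⟨p.1, p.2⟩ : (_ : Fin K) × Fin K))
    (fun x => (x.1, x.2)) ?_ ?_ ?_ ?_ ?_
  · intro p hp
    simp only [Finset.mem_filter, mem_univ, true_and] at hp
    simp [Finset.mem_sigma, Finset.mem_Ioi, hp]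
  · intro x hx
    simp only [Finset.mem_sigma, mem_univ, Finset.mem_Ioi, true_and] at hx
    simp [hx]
  · intro p _; rfl
  · intro x _; rfl
  · intro p _; rfl

lemma prod_pairs_rev {K : ℕ} (f : Fin K → Fin K → ℝ) :
    ∏ p ∈ univ.filter (fun p : Fin K × Fin K => p.1 < p.2), f p.1 p.2
      = ∏ p ∈ univ.filter (fun p : Fin K × Fin K => p.1 < p.2), f p.2.rev p.1.rev := by
  refine Finset.prod_nbij' (fun p => (p.2.rev, p.1.rev)) (fun p => (p.2.rev, p.1.rev))
    ?_ ?_ ?_ ?_ ?_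
  · intro p hp
    simp only [Finset.mem_filter, mem_univ, true_and] at hp ⊢
    exact Fin.rev_lt_rev.2 hp
  · intro p hp
    simp only [Finset.mem_filter, mem_univ, true_and] at hp ⊢
    exact Fin.rev_lt_rev.2 hp
  · intro p _; simp [Fin.rev_rev]
  · intro p _; simp [Fin.rev_rev]
  · intro p _; simp [Fin.rev_rev]

lemma sign_rev_prod {K : ℕ} (v : Fin K → ℝ) :
    ∏ p ∈ univ.filter (fun p : Fin K × Fin K => p.1 < p.2), (v p.1 - v p.2)
      = ((Equiv.Perm.sign (Fin.revPerm : Equiv.Perm (Fin K)) : ℤ) : ℝ) *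
        ∏ p ∈ univ.filter (fun p : Fin K × Fin K => p.1 < p.2), (v p.2 - v p.1) := by
  have h1 : ((Matrix.vandermonde v).submatrix (⇑(Fin.revPerm : Equiv.Perm (Fin K))) id).det
      = ((Equiv.Perm.sign (Fin.revPerm : Equiv.Perm (Fin K)) : ℤ) : ℝ) *
        (Matrix.vandermonde v).det := Matrix.det_permute _ _
  have h2 : ((Matrix.vandermonde v).submatrix (⇑(Fin.revPerm : Equiv.Perm (Fin K))) id)
      = Matrix.vandermonde (fun i => v i.rev) := by
    ext i j
    simp [Matrix.vandermonde, Matrix.submatrix]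
  rw [h2, Matrix.det_vandermonde, Matrix.det_vandermonde] at h1
  rw [← prod_pairs_eq (fun i j => v j.rev - v i.rev), ← prod_pairs_eq (fun i j => v j - v i)]
    at h1
  rw [prod_pairs_rev (fun a b => v b.rev - v a.rev)] at h1
  simp only [Fin.rev_rev] at h1
  exact h1

lemma det_inv_factorial {K : ℕ} (d : Fin K → ℕ) :
    (Matrix.of fun i j : Fin K => (1:ℝ) / ((d i + (j : ℕ)).factorial : ℝ)).det
    = (∏ p ∈ univ.filter (fun p : Fin K × Fin K => p.1 < p.2), ((d p.1 : ℝ) - (d p.2 : ℝ)))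
      / ∏ i : Fin K, ((d i + (K - 1)).factorial : ℝ) := by
  classical
  set G : Matrix (Fin K) (Fin K) ℝ :=
    Matrix.of fun i j : Fin K => (((d i + (j:ℕ) + 1).ascFactorial (K - 1 - (j:ℕ)) : ℕ) : ℝ)
    with hG
  have hfact : ∀ i j : Fin K, ((d i + (K - 1)).factorial : ℝ)
      = ((d i + (j:ℕ)).factorial : ℝ) * (((d i + (j:ℕ) + 1).ascFactorial (K - 1 - (j:ℕ)) : ℕ) : ℝ) := by
    intro i j
    have hnat : (d i + (j:ℕ)).factorial * (d i + (j:ℕ) + 1).ascFactorial (K - 1 - (j:ℕ))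
        = (d i + (K - 1)).factorial := by
      have h := Nat.factorial_mul_ascFactorial (d i + (j:ℕ)) (K - 1 - (j:ℕ))
      have hj : (j:ℕ) < K := j.isLt
      have harg : d i + (j:ℕ) + (K - 1 - (j:ℕ)) = d i + (K - 1) := by omega
      rw [harg] at h
      exact h
    exact_mod_cast hnat.symm
  have hsplit : (Matrix.of fun i j : Fin K => (1:ℝ) / ((d i + (j : ℕ)).factorial : ℝ))
      = Matrix.of fun i j : Fin K => (1 / ((d i + (K - 1)).factorial : ℝ)) * G i j := by
    ext i j
    simp only [Matrix.of_apply, hG]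
    rw [hfact i j]
    have h1 : ((d i + (j:ℕ)).factorial : ℝ) ≠ 0 := by positivity
    have h2 : (((d i + (j:ℕ) + 1).ascFactorial (K - 1 - (j:ℕ)) : ℕ) : ℝ) ≠ 0 := by
      have := Nat.ascFactorial_pos (d i + (j:ℕ)) (K - 1 - (j:ℕ))
      positivity
    field_simp
  have hdmc := Matrix.det_mul_column (fun i : Fin K => 1 / ((d i + (K - 1)).factorial : ℝ)) G
  rw [hsplit, hdmc]
  -- now evaluate det G
  set p : Fin K → Polynomial ℝ := fun j =>
    ∏ t ∈ Finset.range (j:ℕ), (Polynomial.X + Polynomial.C ((K - (j:ℕ) + t : ℕ) : ℝ)) with hpdef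
  have hmonic : ∀ j, (p j).Monic := fun j =>
    Polynomial.monic_prod_of_monic _ _ fun t _ => Polynomial.monic_X_add_C _
  have hdeg : ∀ j : Fin K, (p j).natDegree = (j : ℕ) := by
    intro j
    rw [hpdef]
    rw [Polynomial.natDegree_prod _ _ (fun t _ => (Polynomial.monic_X_add_C _).ne_zero)]
    have hone : ∀ t ∈ Finset.range (j:ℕ),
        (Polynomial.X + Polynomial.C ((K - (j:ℕ) + t : ℕ) : ℝ)).natDegree = 1 :=
      fun t _ => Polynomial.natDegree_X_add_C _
    rw [Finset.sum_congr rfl hone]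
    simp
  have heval : ∀ (i j : Fin K), G i (Fin.rev j) = (p j).eval ((d i : ℝ)) := by
    intro i j
    simp only [hG, Matrix.of_apply, hpdef, Polynomial.eval_prod, Polynomial.eval_add,
      Polynomial.eval_X, Polynomial.eval_C]
    have hj : (j:ℕ) < K := j.isLt
    have hrev : ((Fin.rev j : Fin K) : ℕ) = K - 1 - (j:ℕ) := by
      rw [Fin.val_rev]
      omega
    rw [hrev]
    have h1 : K - 1 - (K - 1 - (j:ℕ)) = (j:ℕ) := by omega
    rw [h1, ascFactorial_cast]
    refine Finset.prod_congr rfl fun t ht => ?_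
    have hnn : (d i + (K - 1 - (j:ℕ)) + 1) + t = d i + (K - (j:ℕ) + t) := by omega
    have hcast : ((d i + (K - 1 - (j:ℕ)) + 1 : ℕ) : ℝ) + (t : ℝ)
        = ((d i : ℕ) : ℝ) + ((K - (j:ℕ) + t : ℕ) : ℝ) := by
      exact_mod_cast congrArg (Nat.cast : ℕ → ℝ) hnn
    exact hcast
  have hGH : G = (Matrix.of fun i j : Fin K => (p j).eval ((d i : ℝ))).submatrix id
      (⇑(Fin.revPerm : Equiv.Perm (Fin K))) := by
    ext i j
    have h := heval i (Fin.rev j)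
    rw [Fin.rev_rev] at h
    simpa [Matrix.submatrix_apply] using h
  have hdetG : G.det = ((Equiv.Perm.sign (Fin.revPerm : Equiv.Perm (Fin K)) : ℤ) : ℝ) *
      ∏ pp ∈ univ.filter (fun pp : Fin K × Fin K => pp.1 < pp.2), ((d pp.2 : ℝ) - (d pp.1 : ℝ)) := by
    rw [hGH, Matrix.det_permute']
    congr 1
    rw [show (Matrix.of fun i j : Fin K => (p j).eval ((d i : ℝ))).det
        = (Matrix.vandermonde (fun i : Fin K => ((d i : ℕ) : ℝ))).det from
      (Matrix.det_eval_matrixOfPolynomials_eq_det_vandermonde _ p hdeg hmonic).symm]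
    rw [Matrix.det_vandermonde, ← prod_pairs_eq (fun i j => ((d j : ℕ):ℝ) - ((d i : ℕ):ℝ))]
  rw [hdetG]
  have hs := sign_rev_prod (fun i => ((d i : ℕ) : ℝ))
  rw [← hs]
  have hinv : (∏ i : Fin K, (1 / ((d i + (K - 1)).factorial : ℝ)))
      = (∏ i : Fin K, ((d i + (K - 1)).factorial : ℝ))⁻¹ := by
    rw [← Finset.prod_inv_distrib]
    simp [one_div]
  rw [hinv, inv_mul_eq_div]

lemma per_term (k : ℕ) (l : Fin k → ℕ) (m : Fin (k+1) → ℕ) :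
    (((∑ i, m i).factorial : ℕ) : ℝ) * Aterm k l m
      = (-1/2 : ℝ) ^ (m 0) * (Nat.multinomial Finset.univ m : ℝ) *
        ((∏ p ∈ univ.filter (fun p : Fin k × Fin k => p.1 < p.2),
            (((2 * l p.1 + m p.1.succ + (p.1 : ℕ) + 1 : ℕ) : ℝ)
              - ((2 * l p.2 + m p.2.succ + (p.2 : ℕ) + 1 : ℕ) : ℝ)))
          / ∏ i : Fin k, (((2 * l i + m i.succ + (i : ℕ) + 1) + (k - 1)).factorial : ℝ)) := by
  classical
  have hprod : ∀ σ : Equiv.Perm (Fin k),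
      (∏ i : Fin k, coefB (2 * l i + (i : ℕ) + (σ i : ℕ) + 1) (m i.succ))
        = (∏ i : Fin k, (1:ℝ) / ((m i.succ).factorial : ℝ)) *
          ∏ i : Fin k, (1:ℝ) / (((2 * l i + m i.succ + (i:ℕ) + 1) + ((σ i : ℕ))).factorial : ℝ) := by
    intro σ
    rw [← Finset.prod_mul_distrib]
    refine Finset.prod_congr rfl fun i _ => ?_
    rw [coefB]
    have harg : 2 * l i + (i:ℕ) + (σ i:ℕ) + 1 + m i.succ
        = (2 * l i + m i.succ + (i:ℕ) + 1) + (σ i : ℕ) := by omega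
    rw [harg, one_div, one_div, one_div, mul_inv]
  have hA : Aterm k l m = ((-1/2:ℝ) ^ (m 0) / ((m 0).factorial : ℝ)) *
      ((∏ i : Fin k, (1:ℝ) / ((m i.succ).factorial : ℝ)) *
        (Matrix.of fun i j : Fin k =>
          (1:ℝ) / ((2 * l i + m i.succ + (i:ℕ) + 1 + (j:ℕ)).factorial : ℝ)).det) := by
    rw [Aterm]
    congr 1
    rw [det_eq_sum_perm, Finset.mul_sum]
    refine Finset.sum_congr rfl fun σ _ => ?_
    rw [hprod σ]
    simp only [Matrix.of_apply]
    ring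
  have hdet := det_inv_factorial (fun i : Fin k => 2 * l i + m i.succ + (i:ℕ) + 1)
  rw [hA, hdet]
  have hM : (Nat.multinomial Finset.univ m : ℝ)
      = (((∑ i, m i).factorial : ℕ) : ℝ) /
        (((m 0).factorial : ℝ) * ∏ i : Fin k, ((m i.succ).factorial : ℝ)) := by
    rw [eq_div_iff (by positivity)]
    have hspec := Nat.multinomial_spec Finset.univ m
    have hps : (∏ i : Fin (k+1), (m i).factorial)
        = (m 0).factorial * ∏ i : Fin k, (m i.succ).factorial := Fin.prod_univ_succ _
    rw [hps] at hspec
    exact_mod_cast congrArg (Nat.cast : ℕ → ℝ) (by rw [← hspec]; ring)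
  rw [hM]
  have hPinv : (∏ i : Fin k, (1:ℝ) / ((m i.succ).factorial : ℝ))
      = (∏ i : Fin k, ((m i.succ).factorial : ℝ))⁻¹ := by
    rw [← Finset.prod_inv_distrib]
    simp [one_div]
  rw [hPinv]
  have hne1 : ((m 0).factorial : ℝ) ≠ 0 := by positivity
  have hne2 : (∏ i : Fin k, ((m i.succ).factorial : ℝ)) ≠ 0 := by positivity
  field_simp

lemma neg_two_zpow (n : ℕ) : (-2:ℝ) ^ (-(n:ℤ)) = (-1/2:ℝ) ^ n := by
  rw [zpow_neg, zpow_natCast, ← inv_pow]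
  norm_num

lemma multinomial_comp_equiv {K : ℕ} (f : Fin K → ℕ) (e : Equiv.Perm (Fin K)) :
    Nat.multinomial Finset.univ (fun i => f (e i)) = Nat.multinomial Finset.univ f := by
  have h1 := Nat.multinomial_spec Finset.univ (fun i => f (e i))
  have h2 := Nat.multinomial_spec Finset.univ f
  rw [Equiv.prod_comp e (fun i => (f i).factorial), Equiv.sum_comp e f] at h1
  have hpos : 0 < ∏ i, (f i).factorial := Finset.prod_pos fun i _ => (f i).factorial_pos
  exact Nat.eq_of_mul_eq_mul_left hpos (h1.trans h2.symm)

def tauFun (k : ℕ) : Fin (k+1) → Fin (k+1) := Fin.cons 0 (fun i => (Fin.rev i).succ)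

lemma tauFun_invol (k : ℕ) : Function.Involutive (tauFun k) := by
  intro x
  refine Fin.cases ?_ ?_ x
  · simp [tauFun]
  · intro i
    simp [tauFun, Fin.cons_succ, Fin.rev_rev]

def tauPerm (k : ℕ) : Equiv.Perm (Fin (k+1)) := (tauFun_invol k).toPerm

lemma tauPerm_zero (k : ℕ) : tauPerm k 0 = 0 := by
  simp [tauPerm, Function.Involutive.coe_toPerm, tauFun]

lemma tauPerm_succ (k : ℕ) (i : Fin k) : tauPerm k i.succ = (Fin.rev i).succ := by
  simp [tauPerm, Function.Involutive.coe_toPerm, tauFun, Fin.cons_succ]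

lemma sum_comp_invol {α : Type*} {s : Finset α} (g : α → α)
    (hg : ∀ a, g (g a) = a) (hs : ∀ a ∈ s, g a ∈ s) (F : α → ℝ) :
    ∑ a ∈ s, F a = ∑ a ∈ s, F (g a) := by
  refine Finset.sum_nbij' g g hs hs (fun a _ => hg a) (fun a _ => hg a) ?_
  intro a _
  rw [hg a]

lemma sum_cons_split (k M : ℕ) (F : (Fin (k+1) → ℕ) → ℝ) :
    ∑ l' ∈ (Fintype.piFinset fun _ : Fin (k+1) => Finset.range (2*M+1)).filter
        (fun l => ∑ i, l i = 2*M), F l'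
    = ∑ h ∈ Finset.range (2*M+1),
        ∑ l ∈ (Fintype.piFinset fun _ : Fin k => Finset.range (2*M+1)).filter
          (fun l => h + ∑ i, l i = 2*M), F (Fin.cons h l) := by
  rw [Finset.sum_sigma' (Finset.range (2*M+1))
    (fun h => (Fintype.piFinset fun _ : Fin k => Finset.range (2*M+1)).filter
      (fun l => h + ∑ i, l i = 2*M)) (fun h l => F (Fin.cons h l))]
  refine Finset.sum_nbij' (fun l' => (⟨l' 0, Fin.tail l'⟩ : Σ _ : ℕ, (Fin k → ℕ)))
    (fun x => Fin.cons x.1 x.2) ?_ ?_ ?_ ?_ ?_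
  · intro l' hl'
    simp only [Finset.mem_filter, Fintype.mem_piFinset, Finset.mem_range] at hl'
    obtain ⟨hmem, hsum⟩ := hl'
    have h0 : l' 0 ≤ 2*M := by
      have h1 : l' 0 ≤ ∑ i, l' i := Finset.single_le_sum (f := l')
        (fun _ _ => Nat.zero_le _) (Finset.mem_univ (0 : Fin (k+1)))
      omega
    simp only [Finset.mem_sigma, Finset.mem_range, Finset.mem_filter, Fintype.mem_piFinset]
    refine ⟨by omega, fun i => hmem i.succ, ?_⟩
    rw [← hsum, Fin.sum_univ_succ]
    rfl
  · intro x hx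
    simp only [Finset.mem_sigma, Finset.mem_range, Finset.mem_filter, Fintype.mem_piFinset] at hx
    obtain ⟨hh, hmem, hsum⟩ := hx
    simp only [Finset.mem_filter, Fintype.mem_piFinset, Finset.mem_range]
    constructor
    · intro i
      refine Fin.cases ?_ ?_ i
      · rw [Fin.cons_zero]; omega
      · intro j
        rw [Fin.cons_succ]
        exact hmem j
    · rw [Fin.sum_univ_succ, Fin.cons_zero]
      simp only [Fin.cons_succ]
      exact hsum
  · intro l' _
    exact Fin.cons_self_tail l'
  · intro x _
    obtain ⟨h, l⟩ := x
    simp [Fin.cons_zero, Fin.tail_cons]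
  · intro l' _
    rw [Fin.cons_self_tail]

lemma inner_eq (k : ℕ) (l' : Fin (k+1) → ℕ) :
    (∑ m ∈ (Fintype.piFinset fun _ : Fin (k + 1) => Finset.range (2 * l' 0 + 1)).filter
        (fun m => ∑ i, m i = 2 * l' 0),
      (-2 : ℝ) ^ (-(m 0 : ℤ)) *
        (Nat.multinomial Finset.univ l' : ℝ) * (Nat.multinomial Finset.univ m : ℝ) *
        (∏ i : Fin k,
          (1 : ℝ) / ((2 * k - ((i : ℕ) + 1) + 2 * l' i.succ + m i.succ).factorial : ℝ)) *
        ∏ p ∈ Finset.univ.filter (fun p : Fin k × Fin k => p.1 < p.2),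
          (((2 * (l' p.2.succ : ℤ) - 2 * (l' p.1.succ : ℤ) + (m p.2.succ : ℤ)
              - (m p.1.succ : ℤ) - ((p.2 : ℕ) : ℤ) + ((p.1 : ℕ) : ℤ)) : ℤ) : ℝ))
    = (Nat.multinomial Finset.univ l' : ℝ) *
        (((2 * l' 0).factorial : ℝ) *
          acoef k (fun i => l' (Fin.rev i).succ) (2 * l' 0)) := by
  classical
  have htau : ∀ m : Fin (k+1) → ℕ, ∀ i, (fun j => m (tauPerm k j)) ((tauPerm k) i) = m i := by
    intro m i
    show m (tauPerm k (tauPerm k i)) = m i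
    simp only [tauPerm, Function.Involutive.coe_toPerm]
    rw [(tauFun_invol k) i]
  rw [sum_comp_invol (fun (m : Fin (k+1) → ℕ) => fun i => m (tauPerm k i))
    (fun m => by funext i; exact htau m i)
    (fun m hm => by
      simp only [Finset.mem_filter, Fintype.mem_piFinset, Finset.mem_range] at hm ⊢
      refine ⟨fun i => hm.1 _, ?_⟩
      rw [Equiv.sum_comp (tauPerm k) m]
      exact hm.2)]
  rw [acoef, Finset.mul_sum, Finset.mul_sum]
  refine Finset.sum_congr rfl fun m hm => ?_
  simp only [Finset.mem_filter, Fintype.mem_piFinset, Finset.mem_range] at hm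
  have hsum : (∑ i, m i) = 2 * l' 0 := hm.2
  simp only [tauPerm_zero, tauPerm_succ]
  set lr : Fin k → ℕ := fun i => l' (Fin.rev i).succ with hlr
  have hpt := per_term k lr m
  rw [hsum] at hpt
  rw [hpt]
  -- (A) zpow
  rw [neg_two_zpow]
  -- (C) multinomial of m ∘ tau = multinomial m
  have hmm : (Nat.multinomial Finset.univ (fun i => m (tauPerm k i)))
      = Nat.multinomial Finset.univ m := multinomial_comp_equiv m (tauPerm k)
  -- the m-composition: note summand currently displays m (tauPerm k 0) etc? we simped
  -- (B) factorial product
  have hB : (∏ i : Fin k,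
      (1 : ℝ) / ((2 * k - ((i : ℕ) + 1) + 2 * l' i.succ + m (Fin.rev i).succ).factorial : ℝ))
      = (∏ i : Fin k, (((2 * lr i + m i.succ + (i : ℕ) + 1) + (k - 1)).factorial : ℝ))⁻¹ := by
    rw [← Equiv.prod_comp (Fin.revPerm : Equiv.Perm (Fin k))
      (fun i => (1 : ℝ) / ((2 * k - ((i : ℕ) + 1) + 2 * l' i.succ + m (Fin.rev i).succ).factorial : ℝ))]
    rw [← Finset.prod_inv_distrib]
    refine Finset.prod_congr rfl fun i _ => ?_
    simp only [Fin.revPerm_apply, Fin.rev_rev, hlr]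
    have h1 : (i : ℕ) < k := i.isLt
    have harg : 2 * k - (((Fin.rev i : Fin k) : ℕ) + 1) + 2 * l' (Fin.rev i).succ + m i.succ
        = 2 * l' (Fin.rev i).succ + m i.succ + (i : ℕ) + 1 + (k - 1) := by
      have h2 : ((Fin.rev i : Fin k) : ℕ) = k - ((i : ℕ) + 1) := rfl
      rw [h2]
      omega
    rw [one_div, harg]
  -- (C) pairs product
  have hC : (∏ p ∈ Finset.univ.filter (fun p : Fin k × Fin k => p.1 < p.2),
      (((2 * (l' p.2.succ : ℤ) - 2 * (l' p.1.succ : ℤ) + (m (Fin.rev p.2).succ : ℤ)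
          - (m (Fin.rev p.1).succ : ℤ) - ((p.2 : ℕ) : ℤ) + ((p.1 : ℕ) : ℤ)) : ℤ) : ℝ))
      = ∏ p ∈ Finset.univ.filter (fun p : Fin k × Fin k => p.1 < p.2),
          (((2 * lr p.1 + m p.1.succ + (p.1 : ℕ) + 1 : ℕ) : ℝ)
            - ((2 * lr p.2 + m p.2.succ + (p.2 : ℕ) + 1 : ℕ) : ℝ)) := by
    rw [prod_pairs_rev (fun a b : Fin k =>
      (((2 * (l' b.succ : ℤ) - 2 * (l' a.succ : ℤ) + (m (Fin.rev b).succ : ℤ)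
          - (m (Fin.rev a).succ : ℤ) - ((b : ℕ) : ℤ) + ((a : ℕ) : ℤ)) : ℤ) : ℝ))]
    refine Finset.prod_congr rfl fun p hp => ?_
    simp only [Fin.rev_rev]
    have h1 : (p.1 : ℕ) < k := p.1.isLt
    have h2 : (p.2 : ℕ) < k := p.2.isLt
    have hv1 : ((Fin.rev p.1 : Fin k) : ℕ) = k - ((p.1 : ℕ) + 1) := rfl
    have hv2 : ((Fin.rev p.2 : Fin k) : ℕ) = k - ((p.2 : ℕ) + 1) := rfl
    have hz : (2 * (l' (Fin.rev p.1).succ : ℤ) - 2 * (l' (Fin.rev p.2).succ : ℤ)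
        + (m p.1.succ : ℤ) - (m p.2.succ : ℤ)
        - ((Fin.rev p.1 : Fin k) : ℤ) + ((Fin.rev p.2 : Fin k) : ℤ))
        = ((2 * lr p.1 + m p.1.succ + (p.1 : ℕ) + 1 : ℕ) : ℤ)
          - ((2 * lr p.2 + m p.2.succ + (p.2 : ℕ) + 1 : ℕ) : ℤ) := by
      rw [hlr]
      have hc1 : ((Fin.rev p.1 : Fin k) : ℤ) = ((k - ((p.1 : ℕ) + 1) : ℕ) : ℤ) := by
        exact_mod_cast congrArg (Nat.cast : ℕ → ℤ) hv1
      have hc2 : ((Fin.rev p.2 : Fin k) : ℤ) = ((k - ((p.2 : ℕ) + 1) : ℕ) : ℤ) := by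
        exact_mod_cast congrArg (Nat.cast : ℕ → ℤ) hv2
      rw [hc1, hc2]
      push_cast
      omega
    rw [hz]
    push_cast
    ring
  rw [hmm, hB, hC]
  ring

end B20

/-- **Theorem (explicit combinatorial formula for `b_{k,M}(2,0)`).**
Below `l, m : Fin (k+1) → ℕ` encode `(l₀,l₁,…,l_k)` and `(m₀,m₁,…,m_k)`, with `l₀ = l 0`,
`lᵢ = l i.succ` for `i = 1,…,k` (indices `i,j = 1,…,k` realised as `Fin k` with `1`-based
index `i+1`; note `−j+i` (1-based) equals `−(p.2)+p.1` (0-based)). -/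
theorem b20_explicit (k M : ℕ) (hk : 1 ≤ k) (hM : M ≤ k) :
    b20 k M =
      (-1 : ℝ) ^ (k * (k - 1) / 2) *
        ∑ l ∈ (Fintype.piFinset fun _ : Fin (k + 1) => Finset.range (2 * M + 1)).filter
            (fun l => ∑ i, l i = 2 * M),
          ∑ m ∈ (Fintype.piFinset fun _ : Fin (k + 1) => Finset.range (2 * l 0 + 1)).filter
              (fun m => ∑ i, m i = 2 * l 0),
            (-2 : ℝ) ^ (-(m 0 : ℤ)) *
              (Nat.multinomial Finset.univ l : ℝ) * (Nat.multinomial Finset.univ m : ℝ) *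
              (∏ i : Fin k,
                (1 : ℝ) / ((2 * k - ((i : ℕ) + 1) + 2 * l i.succ + m i.succ).factorial : ℝ)) *
              ∏ p ∈ Finset.univ.filter (fun p : Fin k × Fin k => p.1 < p.2),
                (((2 * (l p.2.succ : ℤ) - 2 * (l p.1.succ : ℤ) + (m p.2.succ : ℤ)
                    - (m p.1.succ : ℤ) - ((p.2 : ℕ) : ℤ) + ((p.1 : ℕ) : ℤ)) : ℤ) : ℝ) := by
  classical
  have hb : b20 k M = (-1:ℝ) ^ (k * (k - 1) / 2) *
      ∑ h ∈ Finset.range (2*M+1),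
        ∑ l ∈ (Fintype.piFinset fun _ : Fin k => Finset.range (2*M+1)).filter
            (fun l => h + ∑ i, l i = 2*M),
          (Nat.multinomial Finset.univ (Fin.cons h l) : ℝ) *
            iteratedDeriv (2*h) (B20.fFun k l) 0 := rfl
  rw [hb]
  congr 1
  rw [B20.sum_cons_split k M]
  refine Finset.sum_congr rfl fun h hh => ?_
  have hg : ∀ l : Fin k → ℕ, (fun i => (fun i => l (Fin.rev i)) (Fin.rev i)) = l := by
    intro l; funext i; simp [Fin.rev_rev]
  have hs : ∀ l ∈ (Fintype.piFinset fun _ : Fin k => Finset.range (2*M+1)).filter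
      (fun l => h + ∑ i, l i = 2*M),
      (fun i => l (Fin.rev i)) ∈ (Fintype.piFinset fun _ : Fin k => Finset.range (2*M+1)).filter
      (fun l => h + ∑ i, l i = 2*M) := by
    intro l hl
    simp only [Finset.mem_filter, Fintype.mem_piFinset, Finset.mem_range] at hl ⊢
    refine ⟨fun i => hl.1 _, ?_⟩
    have : (∑ i, l (Fin.rev i)) = ∑ i, l i := by
      have := Equiv.sum_comp (Fin.revPerm : Equiv.Perm (Fin k)) l
      simpa [Fin.revPerm_apply] using this
    rw [this]
    exact hl.2
  refine Eq.trans ?_ (B20.sum_comp_invol (fun (l : Fin k → ℕ) => fun i => l (Fin.rev i))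
    hg hs _).symm
  refine Finset.sum_congr rfl fun l hl => ?_
  rw [B20.inner_eq k (Fin.cons h (fun i => l (Fin.rev i)))]
  rw [B20.iteratedDeriv_fFun k l (2*h)]
  have hc0 : (Fin.cons h (fun i => l (Fin.rev i)) : Fin (k+1) → ℕ) 0 = h := Fin.cons_zero _ _
  rw [hc0]
  have hacoef : (fun i => (Fin.cons h (fun j => l (Fin.rev j)) : Fin (k+1) → ℕ) (Fin.rev i).succ)
      = l := by
    funext i
    rw [Fin.cons_succ, Fin.rev_rev]
  rw [hacoef]
  have hcc : (Fin.cons h (fun i => l (Fin.rev i)) : Fin (k+1) → ℕ)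
      = fun x => (Fin.cons h l : Fin (k+1) → ℕ) (B20.tauPerm k x) := by
    funext x
    refine Fin.cases ?_ ?_ x
    · rw [B20.tauPerm_zero, Fin.cons_zero, Fin.cons_zero]
    · intro i
      rw [B20.tauPerm_succ, Fin.cons_succ, Fin.cons_succ]
  rw [hcc, B20.multinomial_comp_equiv (Fin.cons h l) (B20.tauPerm k)]
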